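/- Under instrument unconfoundedness, instrument overlap, monotonicity and instrumentation, the parameter θ₁ = E[Y(1) | D(1) > D(0)] is identified by inverse probability weighting: the denominator E[Z·D/π*] − E[(1−Z)·D/(1−π*)] equals P(D(1) > D(0)) > 0, and E[Y(1) | D(1) > D(0)] = ( E[Z·D·Y/π*(X)] − E[(1−Z)·D·Y/(1−π*(X))] ) / ( E[Z·D/π*(X)] − E[(1−Z)·D/(1−π*(X))] ). -/

import Mathlib

open MeasureTheory ProbabilityTheory MeasurableSpace

set_option linter.unusedSectionVars false

namespace IPWAux

variable {Ω : Type*} [mΩ : MeasurableSpace Ω]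

lemma sup_eq_generateFrom_inter (m₁ m₂ : MeasurableSpace Ω) :
    m₁ ⊔ m₂ = MeasurableSpace.generateFrom
      {s | ∃ g v, MeasurableSet[m₁] g ∧ MeasurableSet[m₂] v ∧ s = g ∩ v} := by
  apply le_antisymm
  · apply sup_le
    · intro s hs
      exact measurableSet_generateFrom ⟨s, Set.univ, hs, MeasurableSet.univ,
        (Set.inter_univ s).symm⟩
    · intro s hs
      exact measurableSet_generateFrom ⟨Set.univ, s, MeasurableSet.univ, hs,
        (Set.univ_inter s).symm⟩
  · rw [generateFrom_le_iff]
    rintro s ⟨g, v, hg, hv, rfl⟩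
    exact ((le_sup_left : m₁ ≤ m₁ ⊔ m₂) g hg).inter ((le_sup_right : m₂ ≤ m₁ ⊔ m₂) v hv)

lemma isPiSystem_inter (m₁ m₂ : MeasurableSpace Ω) :
    IsPiSystem {s | ∃ g v, MeasurableSet[m₁] g ∧ MeasurableSet[m₂] v ∧ s = g ∩ v} := by
  rintro s ⟨g1, v1, hg1, hv1, rfl⟩ t ⟨g2, v2, hg2, hv2, rfl⟩ -
  exact ⟨g1 ∩ g2, v1 ∩ v2, hg1.inter hg2, hv1.inter hv2, by
    rw [Set.inter_inter_inter_comm]⟩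

variable [StandardBorelSpace Ω]

/-- Conditional independence implies the instrument propensity is also the conditional
expectation given the enlarged σ-algebra. -/
lemma condexp_sup_of_condIndep
    (P : Measure Ω) [IsProbabilityMeasure P]
    {β : Type*} [MeasurableSpace β]
    {V : Ω → β} {Z : Ω → ℝ} (hV : Measurable V) (hZ : Measurable Z)
    (hZbin : ∀ᵐ ω ∂P, Z ω = 0 ∨ Z ω = 1)
    {𝓖 : MeasurableSpace Ω} (h𝓖le : 𝓖 ≤ mΩ)
    (hunconf : CondIndepFun 𝓖 h𝓖le V Z P) :
    P[Z | 𝓖] =ᵐ[P] P[Z | 𝓖 ⊔ MeasurableSpace.comap V inferInstance] := by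
  set 𝓥 : MeasurableSpace Ω := MeasurableSpace.comap V inferInstance with h𝓥
  have h𝓥le : 𝓥 ≤ mΩ := hV.comap_le
  have h𝓗le : 𝓖 ⊔ 𝓥 ≤ mΩ := sup_le h𝓖le h𝓥le
  letI : MeasurableSpace Ω := mΩ
  set πs : Ω → ℝ := P[Z | 𝓖] with hπs
  -- Z is integrable (it is a.e. bounded by 1)
  have hZint : Integrable Z P := by
    refine Integrable.mono' (integrable_const (1:ℝ)) hZ.aestronglyMeasurable ?_
    filter_upwards [hZbin] with ω hω
    rcases hω with h | h <;> simp [h]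
  -- Z is a.e. the indicator of B
  set B : Set Ω := Z ⁻¹' {1} with hBdef
  have hB : MeasurableSet[mΩ] B := hZ (measurableSet_singleton 1)
  have hZeq : Z =ᵐ[P] B.indicator (fun _ => (1:ℝ)) := by
    filter_upwards [hZbin] with ω hω
    rcases hω with h0 | h1
    · have : ω ∉ B := by simp [hBdef, h0]
      simp [Set.indicator_of_notMem this, h0]
    · have : ω ∈ B := by simp [hBdef, h1]
      simp [Set.indicator_of_mem this, h1]
  have hπB : P⟦B | 𝓖⟧ =ᵐ[P] πs := condExp_congr_ae hZeq.symm
  -- the set-integral identity on the generating π-system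
  have hmul := (condIndepFun_iff_condExp_inter_preimage_eq_mul
    (hm' := h𝓖le) (μ := P) hV hZ).mp hunconf
  have key : ∀ s, MeasurableSet[𝓖 ⊔ 𝓥] s →
      ∫ x in s, πs x ∂P = ∫ x in s, Z x ∂P := by
    refine fun s hs => MeasurableSpace.induction_on_inter (m := 𝓖 ⊔ 𝓥)
      (C := fun s _ => ∫ x in s, πs x ∂P = ∫ x in s, Z x ∂P)
      (sup_eq_generateFrom_inter 𝓖 𝓥) (isPiSystem_inter 𝓖 𝓥)
      (by simp) ?basic ?compl ?iUnion s hs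
    case basic =>
      intro s hs
      obtain ⟨g, v, hg, hv, rfl⟩ := hs
      have hgm : MeasurableSet[mΩ] g := h𝓖le g hg
      have hvm : MeasurableSet[mΩ] v := h𝓥le v hv
      obtain ⟨t, ht, hpre⟩ := hv
      have hvBint : Integrable ((v ∩ B).indicator (fun _ => (1:ℝ))) P :=
        (integrable_const (1:ℝ)).indicator (hvm.inter hB)
      have hvint : Integrable (v.indicator (fun _ => (1:ℝ))) P :=
        (integrable_const (1:ℝ)).indicator hvm
      have hπint : Integrable πs P := integrable_condExp
      have hprodint : Integrable (fun x => πs x * v.indicator (fun _ => (1:ℝ)) x) P := by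
        have h := hπint.bdd_mul (c := 1) hvint.aestronglyMeasurable
          (Filter.Eventually.of_forall fun x => by by_cases hx : x ∈ v <;> simp [Set.indicator_apply, hx])
        exact h.congr (Filter.Eventually.of_forall fun x => mul_comm _ _)
      -- conditional independence product formula for v and B
      have hmul' : P⟦v ∩ B | 𝓖⟧ =ᵐ[P] fun ω => (P⟦v | 𝓖⟧) ω * πs ω := by
        have := hmul t {1} ht (measurableSet_singleton 1)
        rw [hpre] at this
        exact this.trans (by filter_upwards [hπB] with ω hω; rw [hω])
      -- LHS : ∫_{g∩v} Z
      have hRHS : ∫ x in g ∩ v, Z x ∂P = ∫ x in g, (P⟦v | 𝓖⟧) x * πs x ∂P := by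
        have h1 : ∫ x in g ∩ v, Z x ∂P
            = ∫ x in g ∩ v, B.indicator (fun _ => (1:ℝ)) x ∂P :=
          setIntegral_congr_ae (hgm.inter hvm) (by filter_upwards [hZeq] with ω h _ using h)
        have h2 : ∫ x in g, (v ∩ B).indicator (fun _ => (1:ℝ)) x ∂P
            = ∫ x in g ∩ v, B.indicator (fun _ => (1:ℝ)) x ∂P := by
          rw [← Set.indicator_indicator]
          exact setIntegral_indicator hvm
        have h3 : ∫ x in g, (v ∩ B).indicator (fun _ => (1:ℝ)) x ∂P
            = ∫ x in g, (P⟦v ∩ B | 𝓖⟧) x ∂P :=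
          (setIntegral_condExp h𝓖le hvBint hg).symm
        have h4 : ∫ x in g, (P⟦v ∩ B | 𝓖⟧) x ∂P
            = ∫ x in g, (P⟦v | 𝓖⟧) x * πs x ∂P :=
          setIntegral_congr_ae (hgm) (by filter_upwards [hmul'] with ω h _ using h)
        rw [h1, ← h2, h3, h4]
      -- RHS : ∫_{g∩v} πs
      have hLHS : ∫ x in g ∩ v, πs x ∂P = ∫ x in g, (P⟦v | 𝓖⟧) x * πs x ∂P := by
        have h1 : ∫ x in g ∩ v, πs x ∂P = ∫ x in g, v.indicator πs x ∂P :=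
          (setIntegral_indicator hvm).symm
        have h2 : (fun x => v.indicator πs x)
            = fun x => πs x * v.indicator (fun _ => (1:ℝ)) x := by
          funext x
          by_cases hx : x ∈ v <;> simp [Set.indicator_apply, hx]
        have h3 : P[fun x => πs x * v.indicator (fun _ => (1:ℝ)) x | 𝓖]
            =ᵐ[P] fun x => πs x * (P⟦v | 𝓖⟧) x :=
          condExp_mul_of_stronglyMeasurable_left stronglyMeasurable_condExp hprodint hvint
        have h4 : ∫ x in g, πs x * v.indicator (fun _ => (1:ℝ)) x ∂P
            = ∫ x in g, (P[fun x => πs x * v.indicator (fun _ => (1:ℝ)) x | 𝓖]) x ∂P :=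
          (setIntegral_condExp h𝓖le hprodint hg).symm
        rw [h1, h2, h4]
        refine setIntegral_congr_ae hgm ?_
        filter_upwards [h3] with ω h _
        rw [h, mul_comm]
      rw [hLHS, hRHS]
    case compl =>
      intro s hsm ih
      have hsm' : MeasurableSet[mΩ] s := h𝓗le s hsm
      have e1 := integral_add_compl hsm' (integrable_condExp : Integrable πs P)
      have e2 := integral_add_compl hsm' hZint
      have e3 : ∫ x, πs x ∂P = ∫ x, Z x ∂P := integral_condExp h𝓖le
      linarith
    case iUnion =>
      intro f hdisj hfm ihf
      have hfm' : ∀ i, MeasurableSet[mΩ] (f i) := fun i => h𝓗le _ (hfm i)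
      rw [integral_iUnion hfm' hdisj (integrable_condExp.integrableOn),
        integral_iUnion hfm' hdisj (hZint.integrableOn)]
      exact tsum_congr ihf
  -- conclude by uniqueness of conditional expectation
  exact ae_eq_condExp_of_forall_setIntegral_eq h𝓗le hZint
    (fun s _ _ => integrable_condExp.integrableOn)
    (fun s hs _ => key s hs)
    (StronglyMeasurable.aestronglyMeasurable (stronglyMeasurable_condExp.mono le_sup_left))

/-- IPW identity: if `πs` is (a version of) `P[Z|𝓗]` and `W` is `𝓗`-measurable and
integrable, then the weighted integral of `W/πs · Z` recovers the integral of `W`. -/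
lemma integral_weight_mul
    (P : Measure Ω) [IsProbabilityMeasure P]
    {𝓗 : MeasurableSpace Ω} (h𝓗le : 𝓗 ≤ mΩ)
    {Z πs W : Ω → ℝ}
    (hcond : πs =ᵐ[P] P[Z | 𝓗])
    (hW : StronglyMeasurable[𝓗] W)
    (hπmeas : StronglyMeasurable[𝓗] πs)
    (hπpos : ∀ᵐ ω ∂P, πs ω ≠ 0)
    (hZint : Integrable Z P)
    (hprod : Integrable (fun ω => W ω / πs ω * Z ω) P) :
    ∫ ω, W ω / πs ω * Z ω ∂P = ∫ ω, W ω ∂P := by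
  letI : MeasurableSpace Ω := mΩ
  have hφ : StronglyMeasurable[𝓗] (fun ω => W ω / πs ω) :=
    (hW.measurable.div hπmeas.measurable).stronglyMeasurable
  have h1 : P[fun ω => W ω / πs ω * Z ω | 𝓗]
      =ᵐ[P] fun ω => (W ω / πs ω) * (P[Z | 𝓗]) ω :=
    condExp_mul_of_stronglyMeasurable_left hφ hprod hZint
  have h2 : (fun ω => (W ω / πs ω) * (P[Z | 𝓗]) ω) =ᵐ[P] W := by
    filter_upwards [hcond, hπpos] with ω h h0
    rw [← h, div_mul_cancel₀ _ h0]
  calc ∫ ω, W ω / πs ω * Z ω ∂P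
      = ∫ ω, (P[fun ω => W ω / πs ω * Z ω | 𝓗]) ω ∂P := (integral_condExp h𝓗le).symm
    _ = ∫ ω, W ω ∂P := integral_congr_ae (h1.trans h2)

/-- A random variable that is a.s. `{0,1}`-valued is integrable, and its integral is the
measure of the event `{f = 1}`. -/
lemma integrable_of_binary (P : Measure Ω) [IsProbabilityMeasure P] {f : Ω → ℝ}
    (hf : Measurable f) (hbin : ∀ᵐ ω ∂P, f ω = 0 ∨ f ω = 1) : Integrable f P := by
  refine Integrable.mono' (integrable_const (1:ℝ)) hf.aestronglyMeasurable ?_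
  filter_upwards [hbin] with ω hω
  rcases hω with h | h <;> simp [h]

lemma integral_of_binary (P : Measure Ω) [IsProbabilityMeasure P] {f : Ω → ℝ}
    (hf : Measurable f) (hbin : ∀ᵐ ω ∂P, f ω = 0 ∨ f ω = 1) :
    ∫ ω, f ω ∂P = (P {ω | f ω = 1}).toReal := by
  have hA : MeasurableSet {ω | f ω = 1} := hf (measurableSet_singleton 1)
  have he : f =ᵐ[P] {ω | f ω = 1}.indicator (fun _ => (1:ℝ)) := by
    filter_upwards [hbin] with ω hω
    rcases hω with h | h
    · have : ω ∉ {ω | f ω = 1} := by simp [h]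
      simp [Set.indicator_of_notMem this, h]
    · have : ω ∈ {ω | f ω = 1} := h
      simp [Set.indicator_of_mem this, h]
  rw [integral_congr_ae he, integral_indicator_const (1:ℝ) hA, smul_eq_mul, mul_one]
  rfl

end IPWAux

open IPWAux in
/-- Under instrument unconfoundedness, overlap, monotonicity and instrumentation,
`θ₁ = E[Y(1) | D(1) > D(0)]` is identified by inverse probability weighting. -/
theorem stmt_2
    {Ω : Type*} [mΩ : MeasurableSpace Ω] [StandardBorelSpace Ω] [Nonempty Ω]
    {𝒳 : Type*} [MeasurableSpace 𝒳] [StandardBorelSpace 𝒳]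
    (P : Measure Ω) [IsProbabilityMeasure P]
    (Z D1 D0 Y1 Y0 : Ω → ℝ) (X : Ω → 𝒳)
    (hZmeas : Measurable Z) (hD1meas : Measurable D1) (hD0meas : Measurable D0)
    (hY1meas : Measurable Y1) (hY0meas : Measurable Y0) (hXmeas : Measurable X)
    (hZbin : ∀ᵐ ω ∂P, Z ω = 0 ∨ Z ω = 1)
    (hD1bin : ∀ᵐ ω ∂P, D1 ω = 0 ∨ D1 ω = 1)
    (hD0bin : ∀ᵐ ω ∂P, D0 ω = 0 ∨ D0 ω = 1)
    (𝓖 : MeasurableSpace Ω) (h𝓖 : 𝓖 = MeasurableSpace.comap X inferInstance)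
    (h𝓖le : 𝓖 ≤ mΩ)
    (πs : Ω → ℝ) (hπs : πs = P[Z | 𝓖])
    (hunconf : CondIndepFun 𝓖 h𝓖le (fun ω => (Y1 ω, Y0 ω, D1 ω, D0 ω)) Z P)
    (hoverlap : ∀ᵐ ω ∂P, 0 < πs ω ∧ πs ω < 1)
    (hmono : ∀ᵐ ω ∂P, D0 ω ≤ D1 ω)
    (hinstr : P {ω | D1 ω = 1} ≠ P {ω | D0 ω = 1})
    (D Y : Ω → ℝ)
    (hD : D = fun ω => Z ω * D1 ω + (1 - Z ω) * D0 ω)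
    (hY : Y = fun ω => D ω * Y1 ω + (1 - D ω) * Y0 ω)
    (hint1 : Integrable (fun ω => Z ω * D ω / πs ω) P)
    (hint2 : Integrable (fun ω => (1 - Z ω) * D ω / (1 - πs ω)) P)
    (hint3 : Integrable (fun ω => Z ω * D ω * Y ω / πs ω) P)
    (hint4 : Integrable (fun ω => (1 - Z ω) * D ω * Y ω / (1 - πs ω)) P)
    (hint5 : Integrable Y1 P) :
    ((∫ ω, Z ω * D ω / πs ω ∂P) - (∫ ω, (1 - Z ω) * D ω / (1 - πs ω) ∂P)
        = (P {ω | D0 ω < D1 ω}).toReal) ∧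
    0 < (P {ω | D0 ω < D1 ω}).toReal ∧
    (∫ ω in {ω | D0 ω < D1 ω}, Y1 ω ∂P) / (P {ω | D0 ω < D1 ω}).toReal =
      ((∫ ω, Z ω * D ω * Y ω / πs ω ∂P) - (∫ ω, (1 - Z ω) * D ω * Y ω / (1 - πs ω) ∂P)) /
        ((∫ ω, Z ω * D ω / πs ω ∂P) - (∫ ω, (1 - Z ω) * D ω / (1 - πs ω) ∂P)) := by
  classical
  letI : MeasurableSpace Ω := mΩ
  set V : Ω → ℝ × ℝ × ℝ × ℝ := fun ω => (Y1 ω, Y0 ω, D1 ω, D0 ω) with hVdef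
  have hVmeas : Measurable V :=
    hY1meas.prodMk (hY0meas.prodMk (hD1meas.prodMk hD0meas))
  set 𝓥 : MeasurableSpace Ω := MeasurableSpace.comap V inferInstance with h𝓥def
  have h𝓥le : 𝓥 ≤ mΩ := hVmeas.comap_le
  have h𝓗le : 𝓖 ⊔ 𝓥 ≤ mΩ := sup_le h𝓖le h𝓥le
  letI : MeasurableSpace Ω := mΩ
  have hZint : Integrable Z P := integrable_of_binary P hZmeas hZbin
  have hcond : πs =ᵐ[P] P[Z | 𝓖 ⊔ 𝓥] := by
    rw [hπs]
    exact condexp_sup_of_condIndep P hVmeas hZmeas hZbin h𝓖le hunconf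
  -- measurability with respect to the potential-outcome σ-algebra
  have hVm : Measurable[𝓥] V := Measurable.of_comap_le le_rfl
  have hY1' : Measurable[𝓥] Y1 := measurable_fst.comp hVm
  have hD1' : Measurable[𝓥] D1 :=
    (measurable_fst.comp (measurable_snd.comp measurable_snd)).comp hVm
  have hD0' : Measurable[𝓥] D0 :=
    (measurable_snd.comp (measurable_snd.comp measurable_snd)).comp hVm
  have smD1 : StronglyMeasurable[𝓖 ⊔ 𝓥] D1 :=
    ((hD1'.mono (le_sup_right : 𝓥 ≤ 𝓖 ⊔ 𝓥) le_rfl).stronglyMeasurable)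
  have smD0 : StronglyMeasurable[𝓖 ⊔ 𝓥] D0 :=
    ((hD0'.mono (le_sup_right : 𝓥 ≤ 𝓖 ⊔ 𝓥) le_rfl).stronglyMeasurable)
  have smU1 : StronglyMeasurable[𝓖 ⊔ 𝓥] (fun ω => D1 ω * Y1 ω) :=
    (((hD1'.mul hY1').mono (le_sup_right : 𝓥 ≤ 𝓖 ⊔ 𝓥) le_rfl).stronglyMeasurable)
  have smU0 : StronglyMeasurable[𝓖 ⊔ 𝓥] (fun ω => D0 ω * Y1 ω) :=
    (((hD0'.mul hY1').mono (le_sup_right : 𝓥 ≤ 𝓖 ⊔ 𝓥) le_rfl).stronglyMeasurable)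
  have smπ : StronglyMeasurable[𝓖 ⊔ 𝓥] πs := by
    rw [hπs]; exact stronglyMeasurable_condExp.mono le_sup_left
  have smπ' : StronglyMeasurable[𝓖 ⊔ 𝓥] (fun ω => 1 - πs ω) :=
    stronglyMeasurable_const.sub smπ
  -- overlap
  have hπ0 : ∀ᵐ ω ∂P, πs ω ≠ 0 := by
    filter_upwards [hoverlap] with ω h using ne_of_gt h.1
  have hπ1 : ∀ᵐ ω ∂P, 1 - πs ω ≠ 0 := by
    filter_upwards [hoverlap] with ω h using sub_ne_zero.mpr (ne_of_gt h.2)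
  -- conditional expectation of 1 - Z
  have hZ'int : Integrable (fun ω => 1 - Z ω) P := (integrable_const (1:ℝ)).sub hZint
  have hcond' : (fun ω => 1 - πs ω) =ᵐ[P] P[fun ω => 1 - Z ω | 𝓖 ⊔ 𝓥] := by
    have heq : (fun ω => 1 - Z ω) = ((fun _ => (1:ℝ)) - Z) := rfl
    rw [heq]
    have h := condExp_sub (m := 𝓖 ⊔ 𝓥) (μ := P) (integrable_const (1:ℝ)) hZint
    have hc : P[(fun _ => (1:ℝ)) | 𝓖 ⊔ 𝓥] = fun _ => (1:ℝ) := condExp_const h𝓗le 1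
    filter_upwards [h, hcond] with ω hω h2
    rw [hω, Pi.sub_apply, hc, ← h2]
  -- integrability of the potential-outcome integrands
  have hD1int : Integrable D1 P := integrable_of_binary P hD1meas hD1bin
  have hD0int : Integrable D0 P := integrable_of_binary P hD0meas hD0bin
  have hU1int : Integrable (fun ω => D1 ω * Y1 ω) P := by
    refine Integrable.mono' hint5.abs ((hD1meas.mul hY1meas).aestronglyMeasurable) ?_
    filter_upwards [hD1bin] with ω h
    rcases h with h | h <;> simp [h, abs_nonneg]
  have hU0int : Integrable (fun ω => D0 ω * Y1 ω) P := by
    refine Integrable.mono' hint5.abs ((hD0meas.mul hY1meas).aestronglyMeasurable) ?_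
    filter_upwards [hD0bin] with ω h
    rcases h with h | h <;> simp [h, abs_nonneg]
  -- a.e. identification of the observed integrands
  have hDY : ∀ᵐ ω ∂P, D ω * Y ω = D ω * Y1 ω := by
    filter_upwards [hZbin, hD1bin, hD0bin] with ω hZω hD1ω hD0ω
    have hDbin : D ω = 0 ∨ D ω = 1 := by
      rcases hZω with h | h <;> simp [hD, h, hD1ω, hD0ω]
    rcases hDbin with h | h <;> simp [hY, h]
  have e1 : (fun ω => Z ω * D ω / πs ω) =ᵐ[P] (fun ω => D1 ω / πs ω * Z ω) := by
    filter_upwards [hZbin] with ω h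
    rcases h with h | h <;> simp [hD, h]
  have e2 : (fun ω => (1 - Z ω) * D ω / (1 - πs ω))
      =ᵐ[P] (fun ω => D0 ω / (1 - πs ω) * (1 - Z ω)) := by
    filter_upwards [hZbin] with ω h
    rcases h with h | h <;> simp [hD, h]
  have e3 : (fun ω => Z ω * D ω * Y ω / πs ω)
      =ᵐ[P] (fun ω => D1 ω * Y1 ω / πs ω * Z ω) := by
    filter_upwards [hZbin, hDY] with ω h hdy
    rcases h with h | h
    · simp [h]
    · have hd : D ω = D1 ω := by simp [hD, h]
      rw [h, one_mul, mul_one, hdy, hd]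
  have e4 : (fun ω => (1 - Z ω) * D ω * Y ω / (1 - πs ω))
      =ᵐ[P] (fun ω => D0 ω * Y1 ω / (1 - πs ω) * (1 - Z ω)) := by
    filter_upwards [hZbin, hDY] with ω h hdy
    rcases h with h | h
    · have hd : D ω = D0 ω := by simp [hD, h]
      rw [h, sub_zero, one_mul, mul_one, hdy, hd]
    · simp [h]
  -- the four IPW identities
  have I1 : ∫ ω, D1 ω / πs ω * Z ω ∂P = ∫ ω, D1 ω ∂P :=
    integral_weight_mul P h𝓗le hcond smD1 smπ hπ0 hZint (hint1.congr e1)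
  have I2 : ∫ ω, D0 ω / (1 - πs ω) * (1 - Z ω) ∂P = ∫ ω, D0 ω ∂P :=
    integral_weight_mul P h𝓗le hcond' smD0 smπ' hπ1 hZ'int (hint2.congr e2)
  have I3 : ∫ ω, D1 ω * Y1 ω / πs ω * Z ω ∂P = ∫ ω, D1 ω * Y1 ω ∂P :=
    integral_weight_mul P h𝓗le hcond smU1 smπ hπ0 hZint (hint3.congr e3)
  have I4 : ∫ ω, D0 ω * Y1 ω / (1 - πs ω) * (1 - Z ω) ∂P = ∫ ω, D0 ω * Y1 ω ∂P :=
    integral_weight_mul P h𝓗le hcond' smU0 smπ' hπ1 hZ'int (hint4.congr e4)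
  have r1 : ∫ ω, Z ω * D ω / πs ω ∂P = ∫ ω, D1 ω ∂P := (integral_congr_ae e1).trans I1
  have r2 : ∫ ω, (1 - Z ω) * D ω / (1 - πs ω) ∂P = ∫ ω, D0 ω ∂P :=
    (integral_congr_ae e2).trans I2
  have r3 : ∫ ω, Z ω * D ω * Y ω / πs ω ∂P = ∫ ω, D1 ω * Y1 ω ∂P :=
    (integral_congr_ae e3).trans I3
  have r4 : ∫ ω, (1 - Z ω) * D ω * Y ω / (1 - πs ω) ∂P = ∫ ω, D0 ω * Y1 ω ∂P :=
    (integral_congr_ae e4).trans I4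
  -- the complier event
  set S : Set Ω := {ω | D0 ω < D1 ω} with hSdef
  have hS : MeasurableSet[mΩ] S := measurableSet_lt hD0meas hD1meas
  have hdiffind : (fun ω => D1 ω - D0 ω) =ᵐ[P] S.indicator (fun _ => (1:ℝ)) := by
    filter_upwards [hD1bin, hD0bin, hmono] with ω h1 h0 hm
    rcases h1 with h1 | h1 <;> rcases h0 with h0 | h0
    · have : ω ∉ S := by simp [hSdef, h0, h1]
      simp [Set.indicator_of_notMem this, h0, h1]
    · exfalso; rw [h0, h1] at hm; linarith
    · have : ω ∈ S := by simp [hSdef, h0, h1]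
      simp [Set.indicator_of_mem this, h0, h1]
    · have : ω ∉ S := by simp [hSdef, h0, h1]
      simp [Set.indicator_of_notMem this, h0, h1]
  have hden : ∫ ω, D1 ω ∂P - ∫ ω, D0 ω ∂P = (P S).toReal := by
    rw [← integral_sub hD1int hD0int, integral_congr_ae hdiffind,
      integral_indicator_const (1:ℝ) hS, smul_eq_mul, mul_one]
    rfl
  have hnum : ∫ ω, D1 ω * Y1 ω ∂P - ∫ ω, D0 ω * Y1 ω ∂P = ∫ ω in S, Y1 ω ∂P := by
    rw [← integral_sub hU1int hU0int]
    have he : (fun ω => D1 ω * Y1 ω - D0 ω * Y1 ω) =ᵐ[P] S.indicator Y1 := by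
      filter_upwards [hdiffind] with ω h
      calc D1 ω * Y1 ω - D0 ω * Y1 ω = (D1 ω - D0 ω) * Y1 ω := by ring
        _ = S.indicator (fun _ => (1:ℝ)) ω * Y1 ω := by rw [h]
        _ = S.indicator Y1 ω := by
            by_cases hω : ω ∈ S <;> simp [Set.indicator_apply, hω]
    rw [integral_congr_ae he, integral_indicator hS]
  -- positivity of the denominator
  have hD1eq : ∫ ω, D1 ω ∂P = (P {ω | D1 ω = 1}).toReal := integral_of_binary P hD1meas hD1bin
  have hD0eq : ∫ ω, D0 ω ∂P = (P {ω | D0 ω = 1}).toReal := integral_of_binary P hD0meas hD0bin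
  have hpos : 0 < (P S).toReal := by
    refine lt_of_le_of_ne ENNReal.toReal_nonneg (fun h => ?_)
    have h' : ∫ ω, D1 ω ∂P - ∫ ω, D0 ω ∂P = 0 := by rw [hden, ← h]
    have : (P {ω | D1 ω = 1}).toReal = (P {ω | D0 ω = 1}).toReal := by
      rw [← hD1eq, ← hD0eq]; linarith
    exact hinstr ((ENNReal.toReal_eq_toReal_iff' (measure_ne_top P _) (measure_ne_top P _)).mp this)
  refine ⟨by rw [r1, r2]; exact hden, hpos, ?_⟩
  rw [r1, r2, r3, r4, hnum, hden]
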